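/- One has cos L ≠ 1. Moreover, for every continuous function f : [0,L] → ℝ, the function ψ : [0,L] → ℝ defined by ψ(x) := −((1 − cos(x − L))/(1 − cos L))·∫₀^L (1 − cos y)·f(y) dy + ∫ₓ^L (1 − cos(x − y))·f(y) dy is three times continuously differentiable and satisfies ψ(0) = ψ(L) = 0, ψ'(L) = 0, and −ψ'(x) − ψ'''(x) = f(x) for all x ∈ [0,L]. In other words, ψ is an explicit inverse of the operator φ ↦ −φ' − φ''' under the boundary conditions φ(0) = φ(L) = 0, φ'(L) = 0. -/

import Mathlib

noncomputable def L : ℝ := 2 * Real.pi * Real.sqrt (7 / 3)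

lemma L_pos : 0 < L := by
  unfold L
  have := Real.pi_pos
  have : (0:ℝ) < Real.sqrt (7/3) := Real.sqrt_pos.mpr (by norm_num)
  positivity

lemma cosL_ne_one : Real.cos L ≠ 1 := by
  rw [Ne, Real.cos_eq_one_iff]
  rintro ⟨n, hn⟩
  unfold L at hn
  have hpi : (2 * Real.pi) ≠ 0 := by positivity
  have hn2 : (n : ℝ) * (2 * Real.pi) = Real.sqrt (7/3) * (2 * Real.pi) := by
    linear_combination hn
  have hn' : (n : ℝ) = Real.sqrt (7/3) := mul_right_cancel₀ hpi hn2
  have hsq : ((n : ℝ))^2 = 7/3 := by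
    rw [hn', Real.sq_sqrt (by norm_num : (7:ℝ)/3 ≥ 0)]
  have : (3 : ℝ) * (n:ℝ)^2 = 7 := by linarith
  have h3 : (3 : ℤ) * n^2 = 7 := by exact_mod_cast this
  have := sq_nonneg n
  set m := n^2
  omega

-- FTC helpers
lemma hasDerivAt_intF (g : ℝ → ℝ) (hg : Continuous g) (x : ℝ) :
    HasDerivAt (fun u => ∫ y in u..L, g y) (-g x) x :=
  intervalIntegral.integral_hasDerivAt_left (hg.intervalIntegrable _ _)
    (hg.stronglyMeasurableAtFilter _ _) hg.continuousAt

open Real in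
noncomputable def Psi (c : ℝ) (g : ℝ → ℝ) : ℝ → ℝ := fun x =>
  c * Real.cos (x - L) - c + ((∫ y in x..L, g y)
    - Real.cos x * (∫ y in x..L, Real.cos y * g y)
    - Real.sin x * (∫ y in x..L, Real.sin y * g y))

noncomputable def Psi1 (c : ℝ) (g : ℝ → ℝ) : ℝ → ℝ := fun x =>
  -(c * Real.sin (x - L)) + (Real.sin x * (∫ y in x..L, Real.cos y * g y)
    - Real.cos x * (∫ y in x..L, Real.sin y * g y))

noncomputable def Psi2 (c : ℝ) (g : ℝ → ℝ) : ℝ → ℝ := fun x =>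
  -(c * Real.cos (x - L)) + (Real.cos x * (∫ y in x..L, Real.cos y * g y)
    + Real.sin x * (∫ y in x..L, Real.sin y * g y))

noncomputable def Psi3 (c : ℝ) (g : ℝ → ℝ) : ℝ → ℝ := fun x =>
  c * Real.sin (x - L) - Real.sin x * (∫ y in x..L, Real.cos y * g y)
    + Real.cos x * (∫ y in x..L, Real.sin y * g y) - g x

lemma hasDerivAt_cos_sub (x : ℝ) :
    HasDerivAt (fun x : ℝ => Real.cos (x - L)) (-Real.sin (x - L)) x := by
  simpa [Function.comp_def] using (Real.hasDerivAt_cos (x - L)).comp x ((hasDerivAt_id x).sub_const L)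

lemma hasDerivAt_sin_sub (x : ℝ) :
    HasDerivAt (fun x : ℝ => Real.sin (x - L)) (Real.cos (x - L)) x := by
  simpa [Function.comp_def] using (Real.hasDerivAt_sin (x - L)).comp x ((hasDerivAt_id x).sub_const L)

lemma hasDerivAt_Psi (c : ℝ) (g : ℝ → ℝ) (hg : Continuous g) (x : ℝ) :
    HasDerivAt (Psi c g) (Psi1 c g x) x := by
  have hF := hasDerivAt_intF g hg x
  have hG := hasDerivAt_intF (fun y => Real.cos y * g y) (Real.continuous_cos.mul hg) x
  have hH := hasDerivAt_intF (fun y => Real.sin y * g y) (Real.continuous_sin.mul hg) x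
  have h := (((hasDerivAt_cos_sub x).const_mul c).sub_const c).add
    ((hF.sub ((Real.hasDerivAt_cos x).mul hG)).sub ((Real.hasDerivAt_sin x).mul hH))
  refine h.congr_deriv (Eq.symm ?_)
  simp only [Psi1]
  linear_combination (-(g x)) * Real.sin_sq_add_cos_sq x

lemma hasDerivAt_Psi1 (c : ℝ) (g : ℝ → ℝ) (hg : Continuous g) (x : ℝ) :
    HasDerivAt (Psi1 c g) (Psi2 c g x) x := by
  have hG := hasDerivAt_intF (fun y => Real.cos y * g y) (Real.continuous_cos.mul hg) x
  have hH := hasDerivAt_intF (fun y => Real.sin y * g y) (Real.continuous_sin.mul hg) x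
  have h := (((hasDerivAt_sin_sub x).const_mul c).neg).add
    (((Real.hasDerivAt_sin x).mul hG).sub ((Real.hasDerivAt_cos x).mul hH))
  refine h.congr_deriv (Eq.symm ?_)
  simp only [Psi2]
  ring

lemma hasDerivAt_Psi2 (c : ℝ) (g : ℝ → ℝ) (hg : Continuous g) (x : ℝ) :
    HasDerivAt (Psi2 c g) (Psi3 c g x) x := by
  have hG := hasDerivAt_intF (fun y => Real.cos y * g y) (Real.continuous_cos.mul hg) x
  have hH := hasDerivAt_intF (fun y => Real.sin y * g y) (Real.continuous_sin.mul hg) x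
  have h := (((hasDerivAt_cos_sub x).const_mul c).neg).add
    (((Real.hasDerivAt_cos x).mul hG).add ((Real.hasDerivAt_sin x).mul hH))
  refine h.congr_deriv (Eq.symm ?_)
  simp only [Psi3]
  linear_combination (g x) * Real.sin_sq_add_cos_sq x

lemma continuous_Psi3 (c : ℝ) (g : ℝ → ℝ) (hg : Continuous g) :
    Continuous (Psi3 c g) := by
  have hG : Continuous (fun x => ∫ y in x..L, Real.cos y * g y) :=
    continuous_iff_continuousAt.mpr fun x =>
      (hasDerivAt_intF _ (Real.continuous_cos.mul hg) x).continuousAt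
  have hH : Continuous (fun x => ∫ y in x..L, Real.sin y * g y) :=
    continuous_iff_continuousAt.mpr fun x =>
      (hasDerivAt_intF _ (Real.continuous_sin.mul hg) x).continuousAt
  unfold Psi3
  fun_prop

lemma contDiff_Psi (c : ℝ) (g : ℝ → ℝ) (hg : Continuous g) :
    ContDiff ℝ 3 (Psi c g) := by
  have d0 : deriv (Psi c g) = Psi1 c g := funext fun x => (hasDerivAt_Psi c g hg x).deriv
  have d1 : deriv (Psi1 c g) = Psi2 c g := funext fun x => (hasDerivAt_Psi1 c g hg x).deriv
  have d2 : deriv (Psi2 c g) = Psi3 c g := funext fun x => (hasDerivAt_Psi2 c g hg x).deriv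
  rw [show (3 : WithTop ℕ∞) = 2 + 1 from rfl, contDiff_succ_iff_deriv]
  refine ⟨fun x => (hasDerivAt_Psi c g hg x).differentiableAt, by simp, ?_⟩
  rw [d0, show (2 : WithTop ℕ∞) = 1 + 1 from rfl, contDiff_succ_iff_deriv]
  refine ⟨fun x => (hasDerivAt_Psi1 c g hg x).differentiableAt, by simp, ?_⟩
  rw [d1, show (1 : WithTop ℕ∞) = 0 + 1 from rfl, contDiff_succ_iff_deriv]
  refine ⟨fun x => (hasDerivAt_Psi2 c g hg x).differentiableAt, by simp, ?_⟩
  rw [d2, contDiff_zero]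
  exact continuous_Psi3 c g hg

/-- cos L ≠ 1, and the explicit formula ψ gives an inverse for the
operator φ ↦ −φ' − φ''' under the boundary conditions φ(0) = φ(L) = 0, φ'(L) = 0. -/
theorem stmt_9 :
    Real.cos L ≠ 1 ∧
    ∀ f : ℝ → ℝ, ContinuousOn f (Set.Icc 0 L) →
      ∀ ψ : ℝ → ℝ,
        (∀ x, ψ x =
          -((1 - Real.cos (x - L)) / (1 - Real.cos L))
              * (∫ y in (0 : ℝ)..L, (1 - Real.cos y) * f y)
            + ∫ y in x..L, (1 - Real.cos (x - y)) * f y) →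
        ContDiffOn ℝ 3 ψ (Set.Icc 0 L) ∧
        ψ 0 = 0 ∧ ψ L = 0 ∧
        iteratedDerivWithin 1 ψ (Set.Icc 0 L) L = 0 ∧
        (∀ x ∈ Set.Icc (0 : ℝ) L,
          -(iteratedDerivWithin 1 ψ (Set.Icc 0 L) x)
            - iteratedDerivWithin 3 ψ (Set.Icc 0 L) x = f x) := by
  refine ⟨cosL_ne_one, ?_⟩
  intro f hf ψ hψ
  have hL := L_pos
  have hmemL : L ∈ Set.Icc (0:ℝ) L := ⟨le_of_lt hL, le_refl L⟩
  have husd : UniqueDiffOn ℝ (Set.Icc (0:ℝ) L) := uniqueDiffOn_Icc hL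
  have hCne : (1:ℝ) - Real.cos L ≠ 0 := sub_ne_zero.mpr (Ne.symm cosL_ne_one)
  set g : ℝ → ℝ := fun y => f (min L (max 0 y)) with hgdef
  have hgc : Continuous g := by
    apply hf.comp_continuous
    · exact continuous_const.min (continuous_const.max continuous_id)
    · intro y
      exact ⟨le_min (le_of_lt hL) (le_max_left 0 y), min_le_left _ _⟩
  have hgf : ∀ y ∈ Set.Icc (0:ℝ) L, g y = f y := by
    intro y hy
    simp only [hgdef]
    rw [max_eq_right hy.1, min_eq_right hy.2]
  set C := ∫ y in (0:ℝ)..L, (1 - Real.cos y) * f y with hCdef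
  set c := C / (1 - Real.cos L) with hcdef
  have hEq : Set.EqOn ψ (Psi c g) (Set.Icc 0 L) := by
    intro x hx
    have hint : (∫ y in x..L, (1 - Real.cos (x - y)) * f y)
        = ∫ y in x..L, (1 - Real.cos (x - y)) * g y := by
      apply intervalIntegral.integral_congr
      intro y hy
      rw [Set.uIcc_of_le hx.2] at hy
      show (1 - Real.cos (x - y)) * f y = (1 - Real.cos (x - y)) * g y
      rw [hgf y ⟨le_trans hx.1 hy.1, hy.2⟩]
    have hsplit : (∫ y in x..L, (1 - Real.cos (x - y)) * g y)
        = (∫ y in x..L, g y) - Real.cos x * (∫ y in x..L, Real.cos y * g y)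
          - Real.sin x * (∫ y in x..L, Real.sin y * g y) := by
      have h1 : ∀ y, (1 - Real.cos (x - y)) * g y
          = g y - (Real.cos x * (Real.cos y * g y) + Real.sin x * (Real.sin y * g y)) := by
        intro y; rw [Real.cos_sub]; ring
      rw [intervalIntegral.integral_congr
        (g := fun y => g y - (Real.cos x * (Real.cos y * g y) + Real.sin x * (Real.sin y * g y)))
        (fun y _ => h1 y)]
      rw [intervalIntegral.integral_sub (f := fun y => g y)
        (g := fun y => Real.cos x * (Real.cos y * g y) + Real.sin x * (Real.sin y * g y)) (hgc.intervalIntegrable _ _)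
        (((continuous_const.mul (Real.continuous_cos.mul hgc)).add
          (continuous_const.mul (Real.continuous_sin.mul hgc))).intervalIntegrable _ _),
        intervalIntegral.integral_add (f := fun y => Real.cos x * (Real.cos y * g y))
          (g := fun y => Real.sin x * (Real.sin y * g y))
          ((continuous_const.mul (Real.continuous_cos.mul hgc)).intervalIntegrable _ _)
          ((continuous_const.mul (Real.continuous_sin.mul hgc)).intervalIntegrable _ _),
        intervalIntegral.integral_const_mul, intervalIntegral.integral_const_mul]
      ring
    rw [hψ x, hint, hsplit]
    simp only [Psi]
    rw [hcdef]
    field_simp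
    ring
  have hd1 : ∀ x ∈ Set.Icc (0:ℝ) L, iteratedDerivWithin 1 ψ (Set.Icc 0 L) x = Psi1 c g x := by
    intro x hx
    rw [iteratedDerivWithin_one, derivWithin_congr hEq (hEq hx)]
    exact (hasDerivAt_Psi c g hgc x).hasDerivWithinAt.derivWithin (husd x hx)
  have hd2 : ∀ x ∈ Set.Icc (0:ℝ) L, iteratedDerivWithin 2 ψ (Set.Icc 0 L) x = Psi2 c g x := by
    intro x hx
    rw [show (2:ℕ) = 1 + 1 from rfl, iteratedDerivWithin_succ,
      derivWithin_congr (fun y hy => hd1 y hy) (hd1 x hx)]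
    exact (hasDerivAt_Psi1 c g hgc x).hasDerivWithinAt.derivWithin (husd x hx)
  have hd3 : ∀ x ∈ Set.Icc (0:ℝ) L, iteratedDerivWithin 3 ψ (Set.Icc 0 L) x = Psi3 c g x := by
    intro x hx
    rw [show (3:ℕ) = 2 + 1 from rfl, iteratedDerivWithin_succ,
      derivWithin_congr (fun y hy => hd2 y hy) (hd2 x hx)]
    exact (hasDerivAt_Psi2 c g hgc x).hasDerivWithinAt.derivWithin (husd x hx)
  refine ⟨((contDiff_Psi c g hgc).contDiffOn).congr hEq, ?_, ?_, ?_, ?_⟩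
  · rw [hψ 0]
    simp only [zero_sub, Real.cos_neg]
    rw [div_self hCne]
    ring
  · rw [hψ L]
    simp [intervalIntegral.integral_same]
  · rw [hd1 L hmemL]
    simp [Psi1, intervalIntegral.integral_same]
  · intro x hx
    rw [hd1 x hx, hd3 x hx, ← hgf x hx]
    simp only [Psi1, Psi3]
    ring
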